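/- arXiv:1712.04864 — 2 statements merged into one kernel-verified Lean document; each statement's English description precedes it below -/
import Mathlib

section
/- For every Γ : Type, A1 : Γ → Type and A2 : (Σ x : Γ, A1 x) → Type there is a function isFibΠ : isFib A1 → isFib A2 → isFib (fun x => (a1 : A1 x) → A2 ⟨x, a1⟩), and it is stable under reindexing: for every γ : Δ → Γ, (isFibΠ α1 α2)[γ] = isFibΠ (α1[γ]) (α2[γ ×' id]), where γ ×' id : (Σ x : Δ, A1 (γ x)) → (Σ x : Γ, A1 x) sends ⟨x, a⟩ to ⟨γ x, a⟩. -/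
namespace CCHM

variable {I : Type}

/-- The two endpoints of the interval: `false ↦ i0`, `true ↦ i1`;
negation `!e` swaps the endpoints. -/
def pt (i0 i1 : I) : Bool → I := fun e => bif e then i1 else i0

/-- A composition structure for an `I`-indexed family of types:
any cofibrant partial path extended at endpoint `e` is extended at the other
endpoint `!e`. -/
def Comp (i0 i1 : I) (cof : Prop → Prop) (e : Bool) (A : I → Type) : Type :=
  (φ : Prop) → cof φ → (f : φ → (i : I) → A i) →
    (a0 : A (pt i0 i1 e)) → (∀ u : φ, f u (pt i0 i1 e) = a0) →
    { a1 : A (pt i0 i1 (!e)) // ∀ u : φ, f u (pt i0 i1 (!e)) = a1 }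

/-- A (CCHM) fibration structure on a family `A : Γ → Type`. -/
def isFib (i0 i1 : I) (cof : Prop → Prop) {Γ : Type} (A : Γ → Type) : Type :=
  (e : Bool) → (p : I → Γ) → Comp i0 i1 cof e (fun i => A (p i))

/-- Reindexing of fibration structures: `α[γ] e p := α e (γ ∘ p)`. -/
def reind (i0 i1 : I) (cof : Prop → Prop) {Δ Γ : Type} {A : Γ → Type}
    (γ : Δ → Γ) (α : isFib i0 i1 cof A) : isFib i0 i1 cof (fun x => A (γ x)) :=
  fun e p => α e (fun i => γ (p i))

def cnxE (cnx dsj : I → I → I) (e : Bool) : I → I → I :=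
  fun i j => bif e then dsj i j else cnx i j

theorem cnxE_pt_left {i0 i1 : I} {cnx dsj : I → I → I}
    (ax3 : ∀ x, cnx i0 x = i0 ∧ cnx x i0 = i0 ∧ cnx i1 x = x ∧ cnx x i1 = x)
    (ax4 : ∀ x, dsj i0 x = x ∧ dsj x i0 = x ∧ dsj i1 x = i1 ∧ dsj x i1 = i1)
    (e : Bool) (j : I) : cnxE cnx dsj e (pt i0 i1 e) j = pt i0 i1 e := by
  cases e
  · exact (ax3 j).1
  · exact (ax4 j).2.2.1

theorem cnxE_pt_e {i0 i1 : I} {cnx dsj : I → I → I}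
    (ax3 : ∀ x, cnx i0 x = i0 ∧ cnx x i0 = i0 ∧ cnx i1 x = x ∧ cnx x i1 = x)
    (ax4 : ∀ x, dsj i0 x = x ∧ dsj x i0 = x ∧ dsj i1 x = i1 ∧ dsj x i1 = i1)
    (e : Bool) (i : I) : cnxE cnx dsj e i (pt i0 i1 e) = pt i0 i1 e := by
  cases e
  · exact (ax3 i).2.1
  · exact (ax4 i).2.2.2

theorem cnxE_pt_ne {i0 i1 : I} {cnx dsj : I → I → I}
    (ax3 : ∀ x, cnx i0 x = i0 ∧ cnx x i0 = i0 ∧ cnx i1 x = x ∧ cnx x i1 = x)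
    (ax4 : ∀ x, dsj i0 x = x ∧ dsj x i0 = x ∧ dsj i1 x = i1 ∧ dsj x i1 = i1)
    (e : Bool) (i : I) : cnxE cnx dsj e i (pt i0 i1 (!e)) = i := by
  cases e
  · exact (ax3 i).2.2.2
  · exact (ax4 i).2.1

theorem cof_eq_pt {i0 i1 : I} {cof : Prop → Prop}
    (ax5 : ∀ i : I, cof (i = i0) ∧ cof (i = i1))
    (e : Bool) (i : I) : cof (i = pt i0 i1 e) := by
  cases e
  · exact (ax5 i).1
  · exact (ax5 i).2

theorem fcast {X : Type} {B : X → Type} (g : (x : X) → B x) {x y : X} (h : x = y) :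
    cast (congrArg B h) (g x) = g y := by subst h; rfl

/-- Filling: extend a composition problem to a whole path over `p`. -/
noncomputable def fill (i0 i1 : I) (cof : Prop → Prop) (cnx dsj : I → I → I)
    (ax3 : ∀ x, cnx i0 x = i0 ∧ cnx x i0 = i0 ∧ cnx i1 x = x ∧ cnx x i1 = x)
    (ax4 : ∀ x, dsj i0 x = x ∧ dsj x i0 = x ∧ dsj i1 x = i1 ∧ dsj x i1 = i1)
    (ax5 : ∀ i : I, cof (i = i0) ∧ cof (i = i1))
    (ax6 : ∀ φ ψ : Prop, cof φ → cof ψ → cof (φ ∨ ψ))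
    {Γ : Type} (A : Γ → Type) (α : isFib i0 i1 cof A) (e : Bool) (p : I → Γ)
    (φ : Prop) (cφ : cof φ) (f : φ → (i : I) → A (p i))
    (a0 : A (p (pt i0 i1 e))) (ha0 : ∀ u : φ, f u (pt i0 i1 e) = a0) (i : I) :
    { a : A (p i) //
      (∀ h : i = pt i0 i1 e, cast (congrArg (fun k => A (p k)) h.symm) a0 = a) ∧
      ∀ u : φ, f u i = a } :=
  let B : I → Type := fun k => A (p k)
  let ψ : Prop := i = pt i0 i1 e ∨ φ
  let cψ : cof ψ := ax6 _ _ (cof_eq_pt ax5 e i) cφ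
  let inst : Decidable (i = pt i0 i1 e) := Classical.dec _
  let g : ψ → (j : I) → A (p (cnxE cnx dsj e i j)) := fun u j =>
    @dite _ (i = pt i0 i1 e) inst
      (fun h =>
        cast (congrArg B (by subst h; exact (cnxE_pt_left ax3 ax4 e j).symm)) a0)
      (fun h => f (u.resolve_left h) (cnxE cnx dsj e i j))
  let a0' : A (p (cnxE cnx dsj e i (pt i0 i1 e))) :=
    cast (congrArg B (cnxE_pt_e ax3 ax4 e i).symm) a0
  let agr : ∀ u : ψ, g u (pt i0 i1 e) = a0' := fun u => by
    show dite _ _ _ = a0'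
    split
    · rfl
    · next h =>
        show f (u.resolve_left h) _ =
          cast (congrArg B (cnxE_pt_e ax3 ax4 e i).symm) a0
        rw [← ha0 (u.resolve_left h)]
        exact (fcast (f (u.resolve_left h)) (cnxE_pt_e ax3 ax4 e i).symm).symm
  let b := α e (fun j => p (cnxE cnx dsj e i j)) ψ cψ g a0' agr
  ⟨cast (congrArg B (cnxE_pt_ne ax3 ax4 e i)) b.1,
    fun h => by
      rw [← b.2 (Or.inl h)]
      show _ = cast _ (dite _ _ _)
      rw [dif_pos h, cast_cast],
    fun u => by
      rw [← b.2 (Or.inr u)]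
      show f u i = cast _ (dite _ _ _)
      by_cases h : i = pt i0 i1 e
      · rw [dif_pos h, cast_cast]
        subst h
        rw [ha0 u]
        rfl
      · rw [dif_neg h]
        exact (fcast (f u) (cnxE_pt_ne ax3 ax4 e i)).symm⟩

/-- Composition for Π-types. -/
noncomputable def compPi (i0 i1 : I) (cof : Prop → Prop) (ax2 : i0 ≠ i1) (cnx dsj : I → I → I)
    (ax3 : ∀ x, cnx i0 x = i0 ∧ cnx x i0 = i0 ∧ cnx i1 x = x ∧ cnx x i1 = x)
    (ax4 : ∀ x, dsj i0 x = x ∧ dsj x i0 = x ∧ dsj i1 x = i1 ∧ dsj x i1 = i1)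
    (ax5 : ∀ i : I, cof (i = i0) ∧ cof (i = i1))
    (ax6 : ∀ φ ψ : Prop, cof φ → cof ψ → cof (φ ∨ ψ))
    {Γ : Type} {A1 : Γ → Type} {A2 : (Σ x : Γ, A1 x) → Type}
    (α1 : isFib i0 i1 cof A1) (α2 : isFib i0 i1 cof A2) :
    isFib i0 i1 cof (fun x => (a1 : A1 x) → A2 ⟨x, a1⟩) :=
  fun e p φ cφ f a0 ha0 =>
    let F := fun (a1 : A1 (p (pt i0 i1 (!e)))) (i : I) =>
      fill i0 i1 cof cnx dsj ax3 ax4 ax5 ax6 A1 α1 (!e) p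
        (i1 = i0) (ax5 i1).1 (fun h _ => (ax2 h.symm).elim) a1
        (fun h => (ax2 h.symm).elim) i
    let res := fun (a1 : A1 (p (pt i0 i1 (!e)))) =>
      α2 e (fun i => ⟨p i, (F a1 i).1⟩) φ cφ
        (fun u i => f u i (F a1 i).1) (a0 (F a1 (pt i0 i1 e)).1)
        (fun u => congrFun (ha0 u) _)
    let hbar : ∀ a1, (F a1 (pt i0 i1 (!e))).1 = a1 := fun a1 => by
      have h := ((F a1 (pt i0 i1 (!e))).2.1 rfl).symm
      rwa [cast_eq] at h
    ⟨fun a1 =>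
      cast (congrArg (fun a => A2 ⟨p (pt i0 i1 (!e)), a⟩) (hbar a1)) (res a1).1,
      fun u => funext fun a1 => by
        rw [← (res a1).2 u]
        exact (fcast (f u (pt i0 i1 (!e))) (hbar a1)).symm⟩

/-- Fibration structures lift through Π-types, stably under reindexing. -/
theorem fib_pi (i0 i1 : I) (cof : Prop → Prop)
    (ax2 : i0 ≠ i1)
    (cnx dsj : I → I → I)
    (ax3 : ∀ x, cnx i0 x = i0 ∧ cnx x i0 = i0 ∧ cnx i1 x = x ∧ cnx x i1 = x)
    (ax4 : ∀ x, dsj i0 x = x ∧ dsj x i0 = x ∧ dsj i1 x = i1 ∧ dsj x i1 = i1)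
    (ax5 : ∀ i : I, cof (i = i0) ∧ cof (i = i1))
    (ax6 : ∀ φ ψ : Prop, cof φ → cof ψ → cof (φ ∨ ψ)) :
    ∃ isFibPi : {Γ : Type} → {A1 : Γ → Type} → {A2 : (Σ x : Γ, A1 x) → Type} →
        isFib i0 i1 cof A1 → isFib i0 i1 cof A2 →
        isFib i0 i1 cof (fun x => (a1 : A1 x) → A2 ⟨x, a1⟩),
      ∀ (Δ Γ : Type) (A1 : Γ → Type) (A2 : (Σ x : Γ, A1 x) → Type)
        (α1 : isFib i0 i1 cof A1) (α2 : isFib i0 i1 cof A2) (γ : Δ → Γ),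
        reind i0 i1 cof γ (isFibPi α1 α2) =
          isFibPi (reind i0 i1 cof γ α1)
            (reind i0 i1 cof
              (fun y : Σ x : Δ, A1 (γ x) => (⟨γ y.1, y.2⟩ : Σ x : Γ, A1 x)) α2) := by
  refine ⟨fun {Γ A1 A2} α1 α2 => compPi i0 i1 cof ax2 cnx dsj ax3 ax4 ax5 ax6 α1 α2,
    fun Δ Γ A1 A2 α1 α2 γ => rfl⟩


end CCHM
end

section
/- Given Γ : Type, Φ : Γ → Prop with cof (Φ x) for all x, a family A : Γ|Φ → Type with fibration structure α : isFib A, a family B : Γ → Type with fibration structure β : isFib B, and f : (x : Γ) → (u : [Φ x]) → A ⟨x, u⟩ → B x with equivalence structures (x : Γ) → (u : [Φ x]) → Equiv (f x u), there exist a family G : Γ → Type and a fibration structure γ : isFib G such that G ∘ ι = A (that is, G x = A ⟨x, u⟩ for all x and u : [Φ x]) and, modulo this equality of families, γ[ι] = α. -/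
namespace CCHM

variable {I : Type}

/-- The type of paths from `a0` to `a1` in `X`. -/
def PathT (i0 i1 : I) (X : Type) (a0 a1 : X) : Type :=
  { p : I → X // p i0 = a0 ∧ p i1 = a1 }

/-- Contractibility structure. -/
def Contr (i0 i1 : I) (X : Type) : Type :=
  Σ x0 : X, (x : X) → PathT i0 i1 X x0 x

/-- Equivalence structure on a function: all its path-fibres are contractible. -/
def EquivStr (i0 i1 : I) {X Y : Type} (f : X → Y) : Type :=
  (y : Y) → Contr i0 i1 (Σ x : X, PathT i0 i1 Y (f x) y)

/-- The Glue type: pairs of a partial element of `A` and an element of `B`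
matching along `f`. -/
def Glue {Γ : Type} (Φ : Γ → Prop) (A : { x : Γ // Φ x } → Type) (B : Γ → Type)
    (f : (x : Γ) → (u : Φ x) → A ⟨x, u⟩ → B x) (x : Γ) : Type :=
  { tb : ((u : Φ x) → A ⟨x, u⟩) × B x // ∀ u, f x u (tb.1 u) = tb.2 }

/-- When `Φ x` holds, `Glue x` is in bijection with `A ⟨x, u⟩`. -/
def glueEquiv {Γ : Type} (Φ : Γ → Prop) (A : { x : Γ // Φ x } → Type) (B : Γ → Type)
    (f : (x : Γ) → (u : Φ x) → A ⟨x, u⟩ → B x) (x : Γ) (u : Φ x) :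
    A ⟨x, u⟩ ≃ Glue Φ A B f x where
  toFun a := ⟨(fun _ => a, f x u a), fun _ => rfl⟩
  invFun g := g.1.1 u
  left_inv _ := rfl
  right_inv g := Subtype.ext (Prod.ext rfl (g.2 u))

/-- Transporting a composition structure across a family of bijections. -/
def compEquiv (i0 i1 : I) (cof : Prop → Prop) (e : Bool) {X Y : I → Type}
    (σ : (i : I) → X i ≃ Y i) (c : Comp i0 i1 cof e Y) : Comp i0 i1 cof e X :=
  fun φ cφ g a0 ext =>
    let r := c φ cφ (fun u i => σ i (g u i)) (σ (pt i0 i1 e) a0)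
      (fun u => congrArg (σ (pt i0 i1 e)) (ext u))
    ⟨(σ (pt i0 i1 (!e))).symm r.1,
     fun u => by rw [← r.2 u, Equiv.symm_apply_apply]⟩

theorem compEquiv_refl (i0 i1 : I) (cof : Prop → Prop) (e : Bool) {X : I → Type}
    (σ : (i : I) → X i ≃ X i) (hσ : ∀ i, σ i = Equiv.refl (X i))
    (c : Comp i0 i1 cof e X) : compEquiv i0 i1 cof e σ c = c := by
  have h : σ = fun i => Equiv.refl (X i) := funext hσ
  subst h
  rfl

/-- Core of the composition structure on the Glue family: given the result of
composing the `B`-components, produce the glued element at the target point. -/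
noncomputable def glueCompCore
    (i0 i1 : I) (cof : Prop → Prop)
    (ax2 : i0 ≠ i1) (cnx : I → I → I)
    (ax3 : ∀ x, cnx i0 x = i0 ∧ cnx x i0 = i0 ∧ cnx i1 x = x ∧ cnx x i1 = x)
    (ax5 : ∀ i : I, cof (i = i0) ∧ cof (i = i1))
    (ax6 : ∀ φ ψ : Prop, cof φ → cof ψ → cof (φ ∨ ψ))
    {Γ : Type} (Φ : Γ → Prop) (hΦ : ∀ x, cof (Φ x))
    (A : { x : Γ // Φ x } → Type) (B : Γ → Type)
    (f : (x : Γ) → (u : Φ x) → A ⟨x, u⟩ → B x)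
    (eq : (x : Γ) → (u : Φ x) → EquivStr i0 i1 (f x u))
    (α : isFib i0 i1 cof A) (β : isFib i0 i1 cof B)
    (x : Γ) (ψ : Prop) (cψ : cof ψ)
    (qE : ψ → Glue Φ A B f x) (b1 : B x)
    (hb1 : ∀ w, (qE w).1.2 = b1) :
    { g1 : Glue Φ A B f x // ∀ w, qE w = g1 } := by
  classical
  -- for every proof of Φ at x, produce an element of A extending the tube,
  -- together with a path witnessing compatibility with b1
  have key : ∀ u : Φ x,
      { au : A ⟨x, u⟩ //
        (∀ w : ψ, (qE w).1.1 u = au) ∧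
        ∃ H : I → B x, H i0 = f x u au ∧ H i1 = b1 } := by
    intro u
    obtain ⟨⟨ca, cpath⟩, ctr⟩ := eq x u b1
    -- contraction paths towards the partial element given by qE
    have ρpack : ∀ w : ψ,
        { r : I → A ⟨x, u⟩ // r i0 = ca ∧ r i1 = (qE w).1.1 u } := by
      intro w
      obtain ⟨π, hπ0, hπ1⟩ := ctr ⟨(qE w).1.1 u,
        ⟨fun _ => b1, (((qE w).2 u).trans (hb1 w)).symm, rfl⟩⟩
      exact ⟨fun i => (π i).1, congrArg Sigma.fst hπ0, congrArg Sigma.fst hπ1⟩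
    -- filling in A (constant path), using the connection cnx
    have atil : ∀ i : I, { a : A ⟨x, u⟩ //
        (∀ w : ψ, (ρpack w).1 i = a) ∧ (i = i0 → a = ca) } := by
      intro i
      have hextf : ∀ w : ψ ∨ i = i0,
          (fun (_ : ψ ∨ i = i0) j =>
            if hw : ψ then (ρpack hw).1 (cnx j i) else ca) w i0 = ca := by
        intro w
        show (if hw : ψ then (ρpack hw).1 (cnx i0 i) else ca) = ca
        by_cases hw : ψ
        · rw [dif_pos hw, (ax3 i).1, (ρpack hw).2.1]
        · rw [dif_neg hw]
      obtain ⟨a, ha⟩ := α false (fun _ => ⟨x, u⟩) (ψ ∨ i = i0)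
        (ax6 _ _ cψ (ax5 i).1)
        (fun (_ : ψ ∨ i = i0) j => if hw : ψ then (ρpack hw).1 (cnx j i) else ca)
        ca hextf
      have ha' : ∀ w : ψ ∨ i = i0,
          (if hw : ψ then (ρpack hw).1 (cnx i1 i) else ca) = a := ha
      refine ⟨a, fun w => ?_, fun hi => ?_⟩
      · have h1 := ha' (Or.inl w)
        rw [dif_pos w, (ax3 i).2.2.1] at h1
        exact h1
      · by_cases hw : ψ
        · have h1 := ha' (Or.inl hw)
          rw [dif_pos hw, hi, (ax3 i0).2.2.1, (ρpack hw).2.1] at h1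
          exact h1.symm
        · have h1 := ha' (Or.inr hi)
          rw [dif_neg hw] at h1
          exact h1.symm
    -- the compatibility path H, built by composition in B over a square
    have Hc : ∀ j : I, { b : B x //
        (j = i0 → b = f x u (atil i1).1) ∧ (j = i1 → b = b1) } := by
      intro j
      have hextH : ∀ w : (j = i0) ∨ (j = i1),
          (fun (_ : (j = i0) ∨ (j = i1)) i =>
            if _ : j = i0 then f x u (atil i).1 else b1) w i0 = cpath.1 j := by
        intro w
        show (if _ : j = i0 then f x u (atil i0).1 else b1) = cpath.1 j
        by_cases h0 : j = i0
        · rw [dif_pos h0, (atil i0).2.2 rfl, h0]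
          exact cpath.2.1.symm
        · have h1 : j = i1 := w.resolve_left h0
          rw [dif_neg h0, h1]
          exact cpath.2.2.symm
      obtain ⟨b, hbj⟩ := β false (fun _ => x) ((j = i0) ∨ (j = i1))
        (ax6 _ _ (ax5 j).1 (ax5 j).2)
        (fun (_ : (j = i0) ∨ (j = i1)) i =>
          if _ : j = i0 then f x u (atil i).1 else b1)
        (cpath.1 j) hextH
      have hbj' : ∀ w : (j = i0) ∨ (j = i1),
          (if _ : j = i0 then f x u (atil i1).1 else b1) = b := hbj
      refine ⟨b, fun h0 => ?_, fun h1 => ?_⟩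
      · have h2 := hbj' (Or.inl h0)
        rw [dif_pos h0] at h2
        exact h2.symm
      · have h2 := hbj' (Or.inr h1)
        have h0 : ¬ j = i0 := fun hh => ax2 (hh ▸ h1)
        rw [dif_neg h0] at h2
        exact h2.symm
    exact ⟨(atil i1).1,
      fun w => ((ρpack w).2.2.symm).trans ((atil i1).2.1 w),
      ⟨fun j => (Hc j).1, (Hc i0).2.1 rfl, (Hc i1).2.2 rfl⟩⟩
  -- adjust the B-component
  have hextF : ∀ w : ψ ∨ Φ x,
      (fun (w : ψ ∨ Φ x) j =>
        if hw : ψ then b1 else (key (w.resolve_left hw)).2.2.choose j) w i1 = b1 := by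
    intro w
    show (if hw : ψ then b1 else (key (w.resolve_left hw)).2.2.choose i1) = b1
    by_cases hw : ψ
    · rw [dif_pos hw]
    · rw [dif_neg hw]
      exact (key _).2.2.choose_spec.2
  obtain ⟨b1', hb1'⟩ := β true (fun _ => x) (ψ ∨ Φ x)
    (ax6 _ _ cψ (hΦ x))
    (fun (w : ψ ∨ Φ x) j =>
      if hw : ψ then b1 else (key (w.resolve_left hw)).2.2.choose j)
    b1 hextF
  have hb1'' : ∀ w : ψ ∨ Φ x,
      (if hw : ψ then b1 else (key (w.resolve_left hw)).2.2.choose i0) = b1' := hb1'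
  have hψb : ∀ _ : ψ, b1 = b1' := fun hw => by
    have h2 := hb1'' (Or.inl hw)
    rwa [dif_pos hw] at h2
  have hfb : ∀ u : Φ x, f x u (key u).1 = b1' := by
    intro u
    by_cases hw : ψ
    · have h3 : (qE hw).1.1 u = (key u).1 := (key u).2.1 hw
      rw [← h3, (qE hw).2 u, hb1 hw]
      exact hψb hw
    · have h2 := hb1'' (Or.inr u)
      rw [dif_neg hw] at h2
      have h4 := (key ((Or.inr u : ψ ∨ Φ x).resolve_left hw)).2.2.choose_spec.1
      rw [h4] at h2
      exact h2
  refine ⟨⟨(fun u => (key u).1, b1'), fun u => hfb u⟩, fun w => ?_⟩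
  apply Subtype.ext
  have h1 : (qE w).1.1 = fun u => (key u).1 := funext fun u => (key u).2.1 w
  have h2 : (qE w).1.2 = b1' := (hb1 w).trans (hψb w)
  calc (qE w).1 = ((qE w).1.1, (qE w).1.2) := rfl
    _ = (fun u => (key u).1, b1') := by rw [h1, h2]

/-- Composition structure on the Glue family along any path. -/
noncomputable def glueComp
    (i0 i1 : I) (cof : Prop → Prop)
    (ax2 : i0 ≠ i1) (cnx : I → I → I)
    (ax3 : ∀ x, cnx i0 x = i0 ∧ cnx x i0 = i0 ∧ cnx i1 x = x ∧ cnx x i1 = x)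
    (ax5 : ∀ i : I, cof (i = i0) ∧ cof (i = i1))
    (ax6 : ∀ φ ψ : Prop, cof φ → cof ψ → cof (φ ∨ ψ))
    {Γ : Type} (Φ : Γ → Prop) (hΦ : ∀ x, cof (Φ x))
    (A : { x : Γ // Φ x } → Type) (B : Γ → Type)
    (f : (x : Γ) → (u : Φ x) → A ⟨x, u⟩ → B x)
    (eq : (x : Γ) → (u : Φ x) → EquivStr i0 i1 (f x u))
    (α : isFib i0 i1 cof A) (β : isFib i0 i1 cof B)
    (e : Bool) (p : I → Γ) :
    Comp i0 i1 cof e (fun i => Glue Φ A B f (p i)) := by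
  intro ψ cψ q g0 ext
  obtain ⟨b1, hb1⟩ := β e p ψ cψ (fun w i => (q w i).1.2) g0.1.2
    (fun w => congrArg (fun z : Glue Φ A B f (p (pt i0 i1 e)) => z.1.2) (ext w))
  exact glueCompCore i0 i1 cof ax2 cnx ax3 ax5 ax6 Φ hΦ A B f eq α β
    (p (pt i0 i1 (!e))) ψ cψ (fun w => q w (pt i0 i1 (!e))) b1 hb1

/-- Glueing in the CwF of fibrations: given an equivalence `f` from a fibration
`(A, α)` over `Γ|Φ` to (the restriction of) a fibration `(B, β)` over `Γ`,
there is a fibration `(G, γ)` over `Γ` whose restriction along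
`ι : Γ|Φ ↪ Γ` is exactly `(A, α)`. -/
theorem glue_cwf (i0 i1 : I) (cof : Prop → Prop)
    (ax2 : i0 ≠ i1)
    (cnx dsj : I → I → I)
    (ax3 : ∀ x, cnx i0 x = i0 ∧ cnx x i0 = i0 ∧ cnx i1 x = x ∧ cnx x i1 = x)
    (ax4 : ∀ x, dsj i0 x = x ∧ dsj x i0 = x ∧ dsj i1 x = i1 ∧ dsj x i1 = i1)
    (ax5 : ∀ i : I, cof (i = i0) ∧ cof (i = i1))
    (ax6 : ∀ φ ψ : Prop, cof φ → cof ψ → cof (φ ∨ ψ))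
    (ax8 : ∀ φ : I → Prop, (∀ i, cof (φ i)) → cof (∀ i, φ i))
    (ax9 : ∀ (φ : Prop), cof φ → ∀ (A : φ → Type) (B : Type)
      (s : (u : φ) → A u ≃ B),
      ∃ (B' : Type) (s' : B' ≃ B), ∀ u : φ, ∃ _h : A u = B', HEq (s u) s')
    (Γ : Type) (Φ : Γ → Prop) (hΦ : ∀ x, cof (Φ x))
    (A : { x : Γ // Φ x } → Type) (B : Γ → Type)
    (f : (x : Γ) → (u : Φ x) → A ⟨x, u⟩ → B x)
    (eq : (x : Γ) → (u : Φ x) → EquivStr i0 i1 (f x u))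
    (α : isFib i0 i1 cof A) (β : isFib i0 i1 cof B) :
    ∃ (G : Γ → Type) (γfib : isFib i0 i1 cof G),
      ∃ _h : (fun y : { x : Γ // Φ x } => G y.1) = A,
        HEq (reind i0 i1 cof (fun y : { x : Γ // Φ x } => y.1) γfib) α := by
  classical
  have exG : ∃ (G : Γ → Type) (_σ : (x : Γ) → G x ≃ Glue Φ A B f x),
      ∀ x (u : Φ x), A ⟨x, u⟩ = G x := by
    choose B' s' h using fun x =>
      ax9 (Φ x) (hΦ x) (fun u => A ⟨x, u⟩) (Glue Φ A B f x)
        (fun u => glueEquiv Φ A B f x u)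
    exact ⟨B', s', fun x u => (h x u).choose⟩
  obtain ⟨G, σ', hGA⟩ := exG
  refine ⟨G, fun e p =>
      if h : ∀ i, Φ (p i) then
        compEquiv i0 i1 cof e (fun i => Equiv.cast (hGA (p i) (h i)).symm)
          (α e (fun i => ⟨p i, h i⟩))
      else
        compEquiv i0 i1 cof e (fun i => σ' (p i))
          (glueComp i0 i1 cof ax2 cnx ax3 ax5 ax6 Φ hΦ A B f eq α β e p),
    funext (fun y => (hGA y.1 y.2).symm), ?_⟩
  have hFam : (fun y : { x : Γ // Φ x } => G y.1) = A :=
    funext fun y => (hGA y.1 y.2).symm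
  subst hFam
  refine heq_of_eq ?_
  funext e p
  dsimp only [reind]
  rw [dif_pos (fun i => (p i).2)]
  have hσ : ∀ i : I,
      Equiv.cast (hGA (p i).1 ((p i).2)).symm = Equiv.refl (G (p i).1) := by
    intro i
    rw [show (hGA (p i).1 ((p i).2)).symm = rfl from rfl, Equiv.cast_refl]
  exact compEquiv_refl i0 i1 cof e _ hσ (α e (fun i => ⟨(p i).1, (p i).2⟩))

end CCHM
end
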